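/- The function g on the unit circle defined by g(e^{iθ}) = √2·√(cos θ)·e^{iθ/2} when cos θ ≥ 0 and g(e^{iθ}) = √2·√(−cos θ)·e^{i(θ+π)/2} when cos θ < 0 satisfies g(z)² = z² + 1 for all z ∈ 𝕋, and g is continuous on 𝕋 but not differentiable at θ = π/2. -/

import Mathlib

open Complex Real

/-- The function `g(e^{iθ}) = √2 √(cos θ) e^{iθ/2}` for `cos θ ≥ 0`,
`g(e^{iθ}) = √2 √(−cos θ) e^{i(θ+π)/2}` for `cos θ < 0`, satisfies
`g(z)² = z² + 1` on the circle, is continuous (in the angular parameter),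
but is not differentiable at `θ = π/2`. -/
theorem sqrt_of_zsq_add_one_continuous_not_differentiable :
    let G : ℝ → ℂ := fun θ =>
      if 0 ≤ Real.cos θ then
        (Real.sqrt 2 * Real.sqrt (Real.cos θ) : ℝ) * Complex.exp ((θ / 2 : ℝ) * Complex.I)
      else
        (Real.sqrt 2 * Real.sqrt (-Real.cos θ) : ℝ) *
          Complex.exp (((θ + Real.pi) / 2 : ℝ) * Complex.I)
    (∀ θ : ℝ, (G θ) ^ 2 = (Complex.exp (θ * Complex.I)) ^ 2 + 1) ∧
    Continuous G ∧
    ¬ DifferentiableAt ℝ G (Real.pi / 2) := by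
  intro G
  have key : ∀ θ : ℝ, ((2 * Real.cos θ : ℝ) : ℂ) * Complex.exp (θ * Complex.I)
      = (Complex.exp (θ * Complex.I)) ^ 2 + 1 := by
    intro θ
    have h1 : Complex.exp (θ * Complex.I) * Complex.exp (-(θ * Complex.I)) = 1 := by
      rw [← Complex.exp_add]; simp
    have h2 : Complex.exp (θ * Complex.I) + Complex.exp (-(θ * Complex.I))
        = 2 * Complex.cos θ := by
      rw [Complex.cos]; ring_nf
    calc ((2 * Real.cos θ : ℝ) : ℂ) * Complex.exp (θ * Complex.I)
        = Complex.exp (θ * Complex.I) *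
          (Complex.exp (θ * Complex.I) + Complex.exp (-(θ * Complex.I))) := by
          rw [h2, Complex.ofReal_mul, Complex.ofReal_cos]; push_cast; ring
      _ = (Complex.exp (θ * Complex.I)) ^ 2 + 1 := by rw [mul_add, h1]; ring
  refine ⟨?_, ?_, ?_⟩
  · intro θ
    show (if 0 ≤ Real.cos θ then _ else _) ^ 2 = _
    split_ifs with h
    · have hsq : ((Real.sqrt 2 * Real.sqrt (Real.cos θ) : ℝ) : ℂ) ^ 2
          = ((2 * Real.cos θ : ℝ) : ℂ) := by
        rw [← Complex.ofReal_pow, mul_pow, Real.sq_sqrt (by norm_num : (0:ℝ) ≤ 2),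
          Real.sq_sqrt h]
      rw [mul_pow, hsq, ← Complex.exp_nat_mul]
      rw [← key θ]
      congr 2
      push_cast; ring
    · push_neg at h
      have hsq : ((Real.sqrt 2 * Real.sqrt (-Real.cos θ) : ℝ) : ℂ) ^ 2
          = ((-(2 * Real.cos θ) : ℝ) : ℂ) := by
        rw [← Complex.ofReal_pow, mul_pow, Real.sq_sqrt (by norm_num : (0:ℝ) ≤ 2),
          Real.sq_sqrt (by linarith)]
        push_cast; ring
      rw [mul_pow, hsq, ← Complex.exp_nat_mul]
      have h3 : (2:ℕ) * (((θ + Real.pi) / 2 : ℝ) * Complex.I)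
          = θ * Complex.I + Real.pi * Complex.I := by
        push_cast; ring
      rw [h3, Complex.exp_add, Complex.exp_pi_mul_I, ← key θ]
      push_cast; ring
  · apply Continuous.if
    · intro a ha
      have h0 : (0:ℝ) = Real.cos a :=
        frontier_le_subset_eq continuous_const Real.continuous_cos ha
      simp [← h0]
    · fun_prop
    · fun_prop
  · intro hd
    have hG0 : G (Real.pi / 2) = 0 := by
      simp [G, Real.cos_pi_div_two]
    have hBO := hd.isBigO_sub
    rw [Asymptotics.isBigO_iff] at hBO
    obtain ⟨C, hC⟩ := hBO
    rw [hG0] at hC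
    have htend : Filter.Tendsto (fun t : ℝ => Real.pi / 2 + t) (nhdsWithin 0 (Set.Ioi 0))
        (nhds (Real.pi / 2)) := by
      have h : Filter.Tendsto (fun t : ℝ => Real.pi / 2 + t) (nhds 0) (nhds (Real.pi / 2)) := by
        simpa using (continuous_add_left (Real.pi / 2)).tendsto (0:ℝ)
      exact h.mono_left nhdsWithin_le_nhds
    have h1 : ∀ᶠ t : ℝ in nhdsWithin 0 (Set.Ioi 0),
        ‖G (Real.pi / 2 + t) - 0‖ ≤ C * ‖(Real.pi / 2 + t) - Real.pi / 2‖ :=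
      htend.eventually hC
    have h2 : ∀ᶠ t : ℝ in nhdsWithin 0 (Set.Ioi 0), 0 < t := self_mem_nhdsWithin
    have hδpos : 0 < min 1 (1 / (C ^ 2 + 1)) := by positivity
    have h3 : ∀ᶠ t : ℝ in nhdsWithin 0 (Set.Ioi 0), t < min 1 (1 / (C ^ 2 + 1)) :=
      Filter.Eventually.filter_mono nhdsWithin_le_nhds (eventually_lt_nhds hδpos)
    obtain ⟨t, ht1, ht2, ht3⟩ := (h1.and (h2.and h3)).exists
    have ht0 : 0 < t := ht2
    have htle1 : t < 1 := lt_of_lt_of_le ht3 (min_le_left _ _)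
    have htleC : t < 1 / (C ^ 2 + 1) := lt_of_lt_of_le ht3 (min_le_right _ _)
    have hcos : Real.cos (Real.pi / 2 + t) = -Real.sin t := by rw [Real.cos_add, Real.cos_pi_div_two, Real.sin_pi_div_two]; ring
    have hsinpos : 0 < Real.sin t :=
      Real.sin_pos_of_pos_of_lt_pi ht0 (by linarith [Real.pi_gt_three])
    have hif : ¬ (0 ≤ Real.cos (Real.pi / 2 + t)) := by rw [hcos]; linarith
    have hnorm : ‖G (Real.pi / 2 + t) - 0‖ = Real.sqrt 2 * Real.sqrt (Real.sin t) := by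
      simp only [G, if_neg hif, hcos, neg_neg, sub_zero, norm_mul,
        Complex.norm_real, Complex.norm_exp_ofReal_mul_I, mul_one]
      rw [Real.norm_of_nonneg (Real.sqrt_nonneg _), Real.norm_of_nonneg (Real.sqrt_nonneg _)]
    rw [hnorm] at ht1
    have hsub : Real.pi / 2 + t - Real.pi / 2 = t := by ring
    rw [hsub, Real.norm_eq_abs, abs_of_pos ht0] at ht1
    have hsq2 : 2 * Real.sin t ≤ C ^ 2 * t ^ 2 := by
      have := pow_le_pow_left₀ (by positivity) ht1 2
      rw [mul_pow, mul_pow, Real.sq_sqrt (by norm_num : (0:ℝ) ≤ 2),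
        Real.sq_sqrt hsinpos.le] at this
      linarith
    have hsin : t - t ^ 3 / 4 < Real.sin t := by
      linarith [Real.sin_gt_sub_cube ht0, pow_pos ht0 3]
    have h5 : t * (C ^ 2 + 1) < 1 := (lt_div_iff₀ (by positivity)).mp htleC
    nlinarith [sq_nonneg C, sq_nonneg t, mul_pos ht0 ht0, sq_nonneg (C * t)]
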